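/- arXiv:1809.05631 — 4 statements merged into one kernel-verified Lean document; each statement's English description precedes it below -/
import Mathlib

section
/- Let X₁, …, X_n be independent and identically distributed real-valued random variables on a probability space, and set S_k = X₁ + ⋯ + X_k. Let A be the event {S_k ≥ 0 for all 1 ≤ k ≤ n} and B the event {S_n ≥ 0}. Then P(B)/n ≤ P(A) ≤ P(B). -/
open MeasureTheory ProbabilityTheory

/-- Cyclic lemma: if the total sum is nonnegative, some cyclic shift has all
partial sums nonnegative. -/
lemma aux_cyclic (n : ℕ) (hn : 1 ≤ n) (f : Fin n → ℝ) (hf : 0 ≤ ∑ i, f i) :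
    ∃ j : Fin n, ∀ k, 1 ≤ k → k ≤ n →
      0 ≤ ∑ i ∈ Finset.univ.filter (fun i : Fin n => (i : ℕ) < k), f (i + j) := by
  haveI : NeZero n := ⟨by omega⟩
  have npos : 0 < n := hn
  set F : ℕ → ℝ := fun i => f ⟨i % n, Nat.mod_lt _ npos⟩ with hF
  set G : ℕ → ℝ := fun m => ∑ i ∈ Finset.range m, F i with hGdef
  have hFf : ∀ i : Fin n, F i = f i := by
    intro i
    have : (⟨(i : ℕ) % n, Nat.mod_lt _ npos⟩ : Fin n) = i :=
      Fin.ext (Nat.mod_eq_of_lt i.isLt)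
    simp [hF, this]
  -- the shifted partial sums, expressed via F
  have hsum : ∀ (j : Fin n) (k : ℕ), k ≤ n →
      ∑ i ∈ Finset.univ.filter (fun i : Fin n => (i : ℕ) < k), f (i + j)
        = ∑ i ∈ Finset.range k, F ((j : ℕ) + i) := by
    intro j k hk
    refine Finset.sum_nbij' (fun i => (i : ℕ))
      (fun m => ⟨m % n, Nat.mod_lt _ npos⟩) ?_ ?_ ?_ ?_ ?_
    · intro i hi
      simp only [Finset.mem_filter, Finset.mem_univ, true_and] at hi
      exact Finset.mem_range.mpr hi
    · intro m hm
      have hmk : m < k := Finset.mem_range.mp hm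
      have hmn : m < n := lt_of_lt_of_le hmk hk
      simp [Finset.mem_filter, Nat.mod_eq_of_lt hmn, hmk]
    · intro i hi
      exact Fin.ext (Nat.mod_eq_of_lt i.isLt)
    · intro m hm
      have hmn : m < n := lt_of_lt_of_le (Finset.mem_range.mp hm) hk
      simp [Nat.mod_eq_of_lt hmn]
    · intro i hi
      have : F ((j : ℕ) + (i : ℕ)) = f (i + j) := by
        have hval : ((i + j : Fin n) : ℕ) = ((i : ℕ) + (j : ℕ)) % n := Fin.val_add i j
        have : (⟨((j : ℕ) + (i : ℕ)) % n, Nat.mod_lt _ npos⟩ : Fin n) = i + j := by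
          apply Fin.ext
          simp [hval, Nat.add_comm]
        simp [hF, this]
      exact this.symm
  -- periodicity of G
  have hGper : ∀ t, G (n + t) = G n + G t := by
    intro t
    have := Finset.sum_range_add F n t
    rw [hGdef]
    simp only []
    rw [this]
    congr 1
    refine Finset.sum_congr rfl fun i _ => ?_
    simp [hF, Nat.add_mod_left]
  -- G decomposition along a shift
  have hGshift : ∀ (j k : ℕ), G (j + k) = G j + ∑ i ∈ Finset.range k, F (j + i) :=
    fun j k => Finset.sum_range_add F j k
  have hG0 : G 0 = 0 := by simp [hGdef]
  have hGn : 0 ≤ G n := by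
    have : G n = ∑ i, f i := by
      rw [hGdef]
      simp only []
      rw [← Fin.sum_univ_eq_sum_range F n]
      exact Finset.sum_congr rfl fun i _ => hFf i
    rw [this]; exact hf
  obtain ⟨j, hjmem, hjmin⟩ :=
    Finset.exists_min_image (Finset.range n) G ⟨0, Finset.mem_range.mpr npos⟩
  have hjn : j < n := Finset.mem_range.mp hjmem
  have hj0 : G j ≤ 0 := hG0 ▸ hjmin 0 (Finset.mem_range.mpr npos)
  refine ⟨⟨j, hjn⟩, fun k hk1 hkn => ?_⟩
  rw [hsum ⟨j, hjn⟩ k hkn]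
  have key : G j ≤ G (j + k) := by
    rcases lt_trichotomy (j + k) n with h | h | h
    · exact hjmin _ (Finset.mem_range.mpr h)
    · rw [h]; linarith
    · have ht : j + k = n + (j + k - n) := by omega
      have htn : j + k - n < n := by omega
      rw [ht, hGper]
      have := hjmin _ (Finset.mem_range.mpr htn)
      linarith
  have := hGshift j k
  simp only [Fin.val_mk] at *
  linarith [key, this]

/-- The product measure with identical factors is invariant under permuting coordinates. -/
lemma aux_map_perm {n : ℕ} (ν : Measure ℝ) [IsProbabilityMeasure ν] (σ : Equiv.Perm (Fin n)) :
    (Measure.pi fun _ : Fin n => ν).map (fun g i => g (σ i)) = Measure.pi fun _ : Fin n => ν := by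
  refine ((Measure.pi_eq (μ := fun _ => ν) fun s hs => ?_) : _ = _).symm
  have hmeas : Measurable fun (g : Fin n → ℝ) i => g (σ i) :=
    measurable_pi_lambda _ fun i => measurable_pi_apply (σ i)
  rw [Measure.map_apply hmeas (MeasurableSet.univ_pi hs)]
  have hpre : (fun (g : Fin n → ℝ) i => g (σ i)) ⁻¹' Set.pi Set.univ s
      = Set.pi Set.univ fun i => s (σ.symm i) := by
    ext g
    simp only [Set.mem_preimage, Set.mem_pi, Set.mem_univ, true_implies]
    constructor
    · intro h i
      simpa using h (σ.symm i)
    · intro h i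
      simpa using h (σ i)
  rw [hpre, Measure.pi_pi]
  exact Equiv.prod_comp σ.symm fun i => ν (s i)

/-- The joint law of independent random variables is the product of the marginals. -/
lemma aux_map_eq_pi {Ω : Type} [MeasurableSpace Ω] (μ : Measure Ω) [IsProbabilityMeasure μ]
    {n : ℕ} (X : Fin n → Ω → ℝ) (hmeas : ∀ i, Measurable (X i))
    (hindep : iIndepFun X μ) :
    μ.map (fun ω i => X i ω) = Measure.pi fun i => μ.map (X i) := by
  haveI : ∀ i, IsProbabilityMeasure (μ.map (X i)) :=
    fun i => Measure.isProbabilityMeasure_map (hmeas i).aemeasurable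
  refine ((Measure.pi_eq (μ := fun i => μ.map (X i)) fun s hs => ?_) : _ = _).symm
  rw [Measure.map_apply (measurable_pi_lambda _ hmeas) (MeasurableSet.univ_pi hs)]
  have hpre : (fun ω i => X i ω) ⁻¹' Set.pi Set.univ s = ⋂ i ∈ Finset.univ, X i ⁻¹' s i := by
    ext ω
    simp [Set.mem_pi]
  rw [hpre, hindep.measure_inter_preimage_eq_mul Finset.univ (fun i _ => hs i)]
  exact Finset.prod_congr rfl fun i _ => (Measure.map_apply (hmeas i) (hs i)).symm

/-- For i.i.d. real random variables `X₁, …, X_n` with partial sums `S_k`, the events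
`A = {S_k ≥ 0 for all 1 ≤ k ≤ n}` and `B = {S_n ≥ 0}` satisfy
`P(B)/n ≤ P(A) ≤ P(B)`. -/
theorem prob_all_partial_sums_nonneg (n : ℕ) (hn : 1 ≤ n)
    (Ω : Type) [MeasurableSpace Ω] (μ : Measure Ω) [IsProbabilityMeasure μ]
    (X : Fin n → Ω → ℝ) (hmeas : ∀ i, Measurable (X i))
    (hindep : iIndepFun X μ)
    (hident : ∀ i j, Measure.map (X i) μ = Measure.map (X j) μ) :
    μ {ω | 0 ≤ ∑ i, X i ω} / n ≤
        μ {ω | ∀ k, 1 ≤ k → k ≤ n →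
          0 ≤ ∑ i ∈ Finset.univ.filter (fun i : Fin n => (i : ℕ) < k), X i ω} ∧
      μ {ω | ∀ k, 1 ≤ k → k ≤ n →
          0 ≤ ∑ i ∈ Finset.univ.filter (fun i : Fin n => (i : ℕ) < k), X i ω} ≤
        μ {ω | 0 ≤ ∑ i, X i ω} := by
  haveI : NeZero n := ⟨by omega⟩
  set ν : Measure ℝ := μ.map (X ⟨0, by omega⟩) with hν
  haveI : IsProbabilityMeasure ν :=
    Measure.isProbabilityMeasure_map (hmeas _).aemeasurable
  set T : Ω → (Fin n → ℝ) := fun ω i => X i ω with hTdef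
  have hT : Measurable T := measurable_pi_lambda _ hmeas
  have hjoint : μ.map T = Measure.pi fun _ : Fin n => ν := by
    rw [hTdef]
    rw [aux_map_eq_pi μ X hmeas hindep]
    congr 1
    funext i
    exact hident i _
  -- the key measurable sets in the path space
  set SA : Set (Fin n → ℝ) :=
    {f | ∀ k, 1 ≤ k → k ≤ n →
      0 ≤ ∑ i ∈ Finset.univ.filter (fun i : Fin n => (i : ℕ) < k), f i} with hSAdef
  set SB : Set (Fin n → ℝ) := {f | 0 ≤ ∑ i, f i} with hSBdef
  have hsum_meas : ∀ s : Finset (Fin n),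
      Measurable fun f : Fin n → ℝ => ∑ i ∈ s, f i :=
    fun s => Finset.measurable_sum _ fun i _ => measurable_pi_apply i
  have hSA : MeasurableSet SA := by
    have : SA = ⋂ k, ⋂ (_ : 1 ≤ k), ⋂ (_ : k ≤ n),
        {f : Fin n → ℝ |
          0 ≤ ∑ i ∈ Finset.univ.filter (fun i : Fin n => (i : ℕ) < k), f i} := by
      ext f; simp [hSAdef, Set.mem_iInter]
    rw [this]
    exact MeasurableSet.iInter fun k => MeasurableSet.iInter fun _ =>
      MeasurableSet.iInter fun _ => measurableSet_le measurable_const (hsum_meas _)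
  have hSB : MeasurableSet SB := measurableSet_le measurable_const (hsum_meas _)
  -- shift maps on the path space
  have hshift_meas : ∀ j : Fin n, Measurable fun (g : Fin n → ℝ) i => g (i + j) :=
    fun j => measurable_pi_lambda _ fun i => measurable_pi_apply (i + j)
  -- the measure of each shifted event equals the measure of A
  have hA_eq : ∀ j : Fin n,
      μ (T ⁻¹' ((fun (g : Fin n → ℝ) i => g (i + j)) ⁻¹' SA)) = μ (T ⁻¹' SA) := by
    intro j
    rw [← Measure.map_apply hT ((hshift_meas j) hSA), hjoint,
      ← Measure.map_apply (hshift_meas j) hSA,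
      ← Measure.map_apply hT hSA, hjoint]
    congr 1
    exact aux_map_perm ν (Equiv.addRight j)
  -- identify the events in Ω with preimages under T
  have hAset : {ω | ∀ k, 1 ≤ k → k ≤ n →
      0 ≤ ∑ i ∈ Finset.univ.filter (fun i : Fin n => (i : ℕ) < k), X i ω} = T ⁻¹' SA := rfl
  have hBset : {ω | 0 ≤ ∑ i, X i ω} = T ⁻¹' SB := rfl
  constructor
  · -- P(B)/n ≤ P(A)
    have hsub : T ⁻¹' SB ⊆
        ⋃ j : Fin n, T ⁻¹' ((fun (g : Fin n → ℝ) i => g (i + j)) ⁻¹' SA) := by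
      intro ω hω
      obtain ⟨j, hj⟩ := aux_cyclic n hn (T ω) hω
      exact Set.mem_iUnion.mpr ⟨j, hj⟩
    have hle : μ (T ⁻¹' SB) ≤ (n : ENNReal) * μ (T ⁻¹' SA) := by
      calc μ (T ⁻¹' SB)
          ≤ μ (⋃ j : Fin n, T ⁻¹' ((fun (g : Fin n → ℝ) i => g (i + j)) ⁻¹' SA)) :=
            measure_mono hsub
        _ ≤ ∑ j : Fin n, μ (T ⁻¹' ((fun (g : Fin n → ℝ) i => g (i + j)) ⁻¹' SA)) :=
            measure_iUnion_fintype_le _ _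
        _ = ∑ _j : Fin n, μ (T ⁻¹' SA) := Finset.sum_congr rfl fun j _ => hA_eq j
        _ = (n : ENNReal) * μ (T ⁻¹' SA) := by
            simp [Finset.sum_const, mul_comm]
    rw [hAset, hBset]
    exact ENNReal.div_le_of_le_mul (hle.trans_eq (mul_comm _ _))
  · -- P(A) ≤ P(B)
    rw [hAset, hBset]
    apply measure_mono
    intro f hf
    have := hf n hn le_rfl
    have hfilter : Finset.univ.filter (fun i : Fin n => (i : ℕ) < n) = Finset.univ := by
      apply Finset.filter_true_of_mem
      intro i _
      exact i.isLt
    rwa [hfilter] at this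
end

section
/- Let q ≥ 0 and b be integers, and for each k ∈ ℕ and z ∈ ℤ let F_{k,z} and G_{k,z} be probability distributions on the nonnegative integers. Let (S_k)_{k≥0} and (T_k)_{k≥0} be the time-inhomogeneous Markov chains with S₀ = T₀ = b, S_{k+1} = S_k + X_k − q where, conditionally on S₀,…,S_k, the increment X_k has law F_{k,S_k}, and T_{k+1} = T_k + Y_k − q where, conditionally on T₀,…,T_k, the increment Y_k has law G_{k,T_k}. Assume: (1) for all k ∈ ℕ, z ∈ ℤ and l ∈ ℝ, G_{k,z}((−∞,l]) ≤ G_{k,z−1}((−∞,l+1]); (2) there exists an integer M ≥ b such that for every k ∈ ℕ and every integer z ≤ M − k·q, one has F_{k,z}((−∞,l]) ≤ G_{k,z}((−∞,l]) for all l ∈ ℝ. Then for every n ≥ 1 and every sequence of integers l₁, …, l_n satisfying l_k ≤ M − k·q for each k, P(S₁ > l₁, S₂ > l₂, …, S_n > l_n) ≥ P(T₁ > l₁, T₂ > l₂, …, T_n > l_n). -/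
open MeasureTheory

/-- The cumulative distribution function `μ((-∞, l])` of a distribution `p` on the
nonnegative integers, evaluated at a real number `l`. -/
noncomputable def pmfCdf (p : PMF ℕ) (l : ℝ) : ENNReal :=
  p.toMeasure {m : ℕ | (m : ℝ) ≤ l}

/-- `surv F q l k n z` is the probability that the Markov chain started at time `k`
in state `z`, with increments `X_j ~ F_{j, state}` and steps `state ↦ state + X_j - q`,
satisfies `S_{k+1} > l (k+1), …, S_{k+n} > l (k+n)`.  This is the finite-horizon law
given by iterated kernel composition. -/
noncomputable def surv (F : ℕ → ℤ → PMF ℕ) (q : ℕ) (l : ℕ → ℤ) :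
    ℕ → ℕ → ℤ → ENNReal
  | _, 0, _ => 1
  | k, n + 1, z =>
      ∑' x : ℕ,
        F k z x *
          (if l (k + 1) < z + (x : ℤ) - q then surv F q l (k + 1) n (z + (x : ℤ) - q)
           else 0)

open scoped ENNReal

noncomputable def cdfN (p : PMF ℕ) (j : ℕ) : ℝ≥0∞ := ∑' x, if x ≤ j then p x else 0
noncomputable def tailN (p : PMF ℕ) (j : ℕ) : ℝ≥0∞ := ∑' x, if j < x then p x else 0

lemma pmfCdf_natCast (p : PMF ℕ) (j : ℕ) : pmfCdf p (j : ℝ) = cdfN p j := by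
  rw [pmfCdf, PMF.toMeasure_apply (hs := by trivial)]
  refine tsum_congr fun x => ?_
  simp [Set.indicator_apply, Nat.cast_le]

lemma cdfN_add_tailN (p : PMF ℕ) (j : ℕ) : cdfN p j + tailN p j = 1 := by
  rw [cdfN, tailN, ← ENNReal.tsum_add, ← p.tsum_coe]
  refine tsum_congr fun x => ?_
  by_cases h : x ≤ j
  · rw [if_pos h, if_neg (not_lt.mpr h), add_zero]
  · rw [if_neg h, if_pos (not_le.mp h), zero_add]

lemma tailN_le_one (p : PMF ℕ) (j : ℕ) : tailN p j ≤ 1 :=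
  le_add_self.trans_eq (cdfN_add_tailN p j)

lemma tailN_mono (p₁ p₂ : PMF ℕ) (j j' : ℕ) (h : cdfN p₂ j' ≤ cdfN p₁ j) :
    tailN p₁ j ≤ tailN p₂ j' := by
  have h₁ := cdfN_add_tailN p₁ j
  have h₂ := cdfN_add_tailN p₂ j'
  have hfin : cdfN p₁ j ≠ ∞ :=
    ne_top_of_le_ne_top ENNReal.one_ne_top (le_self_add.trans_eq h₁)
  have hfin₂ : cdfN p₂ j' ≠ ∞ :=
    ne_top_of_le_ne_top ENNReal.one_ne_top (le_self_add.trans_eq h₂)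
  have e₁ : tailN p₁ j = 1 - cdfN p₁ j :=
    ENNReal.eq_sub_of_add_eq hfin (by rw [add_comm]; exact h₁)
  have e₂ : tailN p₂ j' = 1 - cdfN p₂ j' :=
    ENNReal.eq_sub_of_add_eq hfin₂ (by rw [add_comm]; exact h₂)
  rw [e₁, e₂]
  exact tsub_le_tsub_left h 1

lemma phi_eq (φ : ℕ → ℝ≥0∞) (hφ : Monotone φ) (x : ℕ) :
    φ 0 + ∑ j ∈ Finset.range x, (φ (j+1) - φ j) = φ x := by
  induction x with
  | zero => simp
  | succ x ih =>
    rw [Finset.sum_range_succ, ← add_assoc, ih, add_comm,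
      tsub_add_cancel_of_le (hφ (Nat.le_succ x))]

lemma exp_decomp (p : PMF ℕ) (φ : ℕ → ℝ≥0∞) (hφ : Monotone φ) :
    ∑' x, p x * φ x = φ 0 + ∑' j, (φ (j+1) - φ j) * tailN p j := by
  have key : ∀ x, p x * φ x
      = p x * φ 0 + ∑' j, (if j < x then (φ (j+1) - φ j) * p x else 0) := by
    intro x
    have hsum : (∑' j, (if j < x then (φ (j+1) - φ j) * p x else 0))
        = (∑ j ∈ Finset.range x, (φ (j+1) - φ j)) * p x := by
      rw [tsum_eq_sum (s := Finset.range x) (fun j hj => if_neg (by simpa using hj)),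
        Finset.sum_mul]
      exact Finset.sum_congr rfl fun j hj => if_pos (Finset.mem_range.mp hj)
    rw [hsum, ← phi_eq φ hφ x]
    ring
  calc ∑' x, p x * φ x
      = ∑' x, (p x * φ 0 + ∑' j, (if j < x then (φ (j+1) - φ j) * p x else 0)) :=
        tsum_congr key
    _ = (∑' x, p x * φ 0) + ∑' x, ∑' j, (if j < x then (φ (j+1) - φ j) * p x else 0) :=
        ENNReal.tsum_add
    _ = φ 0 + ∑' j, (φ (j+1) - φ j) * tailN p j := by
        congr 1
        · rw [ENNReal.tsum_mul_right, p.tsum_coe, one_mul]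
        · rw [ENNReal.tsum_comm]
          refine tsum_congr fun j => ?_
          rw [tailN, ← ENNReal.tsum_mul_left]
          exact tsum_congr fun x => by simp [mul_ite]

lemma exp_mono (p₁ p₂ : PMF ℕ) (φ : ℕ → ℝ≥0∞) (hφ : Monotone φ)
    (h : ∀ j : ℕ, cdfN p₂ j ≤ cdfN p₁ j) :
    ∑' x, p₁ x * φ x ≤ ∑' x, p₂ x * φ x := by
  rw [exp_decomp p₁ φ hφ, exp_decomp p₂ φ hφ]
  exact add_le_add_right (ENNReal.tsum_le_tsum fun j =>
    mul_le_mul_right (tailN_mono p₁ p₂ j j (h j)) _) _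

lemma exp_mono_shift (p₁ p₂ : PMF ℕ) (φ : ℕ → ℝ≥0∞) (hφ : Monotone φ)
    (h : ∀ j : ℕ, cdfN p₂ j ≤ cdfN p₁ (j+1)) :
    ∑' x, p₁ x * φ x ≤ ∑' x, p₂ x * φ (x+1) := by
  have hφ' : Monotone (fun x => φ (x+1)) := fun a b hab => hφ (Nat.succ_le_succ hab)
  have e2 : ∑' x, p₂ x * φ (x+1)
      = φ 1 + ∑' j, (φ (j+2) - φ (j+1)) * tailN p₂ j := exp_decomp p₂ (fun x => φ (x+1)) hφ'
  have e1 : (∑' j, (φ (j+1) - φ j) * tailN p₁ j)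
      = (φ 1 - φ 0) * tailN p₁ 0 + ∑' j, (φ (j+2) - φ (j+1)) * tailN p₁ (j+1) :=
    tsum_eq_zero_add' ENNReal.summable
  rw [exp_decomp p₁ φ hφ, e1, e2]
  calc φ 0 + ((φ 1 - φ 0) * tailN p₁ 0
        + ∑' j, (φ (j+2) - φ (j+1)) * tailN p₁ (j+1))
      ≤ φ 0 + ((φ 1 - φ 0) * 1
        + ∑' j, (φ (j+2) - φ (j+1)) * tailN p₂ j) := by
        refine add_le_add_right (add_le_add ?_ ?_) _
        · exact mul_le_mul_right (tailN_le_one p₁ 0) _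
        · exact ENNReal.tsum_le_tsum fun j =>
            mul_le_mul_right (tailN_mono p₁ p₂ (j+1) j (h j)) _
    _ = φ 1 + ∑' j, (φ (j+2) - φ (j+1)) * tailN p₂ j := by
        rw [mul_one, ← add_assoc, add_comm (φ 0), tsub_add_cancel_of_le (hφ (Nat.zero_le 1))]

lemma surv_zero (F : ℕ → ℤ → PMF ℕ) (q : ℕ) (l : ℕ → ℤ) (k : ℕ) (z : ℤ) :
    surv F q l k 0 z = 1 := rfl

lemma surv_succ (F : ℕ → ℤ → PMF ℕ) (q : ℕ) (l : ℕ → ℤ) (k n : ℕ) (z : ℤ) :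
    surv F q l k (n+1) z
      = ∑' x : ℕ, F k z x *
          (if l (k + 1) < z + (x : ℤ) - q then surv F q l (k + 1) n (z + (x : ℤ) - q)
           else 0) := rfl

lemma surv_le_one (F : ℕ → ℤ → PMF ℕ) (q : ℕ) (l : ℕ → ℤ) :
    ∀ (n k : ℕ) (z : ℤ), surv F q l k n z ≤ 1 := by
  intro n
  induction n with
  | zero => intro k z; exact le_of_eq (surv_zero F q l k z)
  | succ n ih =>
    intro k z
    rw [surv_succ]
    calc (∑' x : ℕ, F k z x *
          (if l (k + 1) < z + (x : ℤ) - q then surv F q l (k + 1) n (z + (x : ℤ) - q) else 0))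
        ≤ ∑' x : ℕ, F k z x * 1 := by
          refine ENNReal.tsum_le_tsum fun x => mul_le_mul_right ?_ _
          split
          · exact ih (k+1) _
          · exact zero_le_one
      _ = 1 := by simp [(F k z).tsum_coe]

lemma surv_eq_one (F : ℕ → ℤ → PMF ℕ) (q : ℕ) (M : ℤ) (l : ℕ → ℤ) :
    ∀ (n k : ℕ) (z : ℤ), (∀ j, k < j → j ≤ k + n → l j ≤ M - j * q) →
      M - k * q < z → surv F q l k n z = 1 := by
  intro n
  induction n with
  | zero => intro k z _ _; exact surv_zero F q l k z
  | succ n ih =>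
    intro k z hl hz
    rw [surv_succ]
    have key : ∀ x : ℕ,
        (if l (k + 1) < z + (x : ℤ) - q then surv F q l (k + 1) n (z + (x : ℤ) - q) else 0)
          = 1 := by
      intro x
      have hx : (0 : ℤ) ≤ (x : ℤ) := Int.natCast_nonneg x
      have hcast : ((k + 1 : ℕ) : ℤ) * q = (k : ℤ) * q + q := by push_cast; ring
      have hz' : M - ((k + 1 : ℕ) : ℤ) * q < z + (x : ℤ) - q := by
        rw [hcast]; linarith
      have hind : l (k + 1) < z + (x : ℤ) - q := by
        have := hl (k + 1) (Nat.lt_succ_self k) (by omega)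
        calc l (k+1) ≤ M - ((k+1 : ℕ) : ℤ) * q := this
          _ < z + (x : ℤ) - q := hz'
      rw [if_pos hind, ih (k+1) _ (fun j hj hj' => hl j (by omega) (by omega)) hz']
    calc (∑' x : ℕ, F k z x *
          (if l (k + 1) < z + (x : ℤ) - q then surv F q l (k + 1) n (z + (x : ℤ) - q) else 0))
        = ∑' x : ℕ, F k z x * 1 := tsum_congr fun x => by rw [key x]
      _ = 1 := by simp [(F k z).tsum_coe]

lemma monotone_int_of_step {f : ℤ → ℝ≥0∞} (h : ∀ z, f z ≤ f (z + 1)) : Monotone f := by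
  intro a b hab
  refine Int.le_induction (motive := fun w _ => f a ≤ f w) (le_refl (f a)) (fun w _ ih => ih.trans (h w)) b hab

lemma chi_mono {f : ℤ → ℝ≥0∞} (hf : Monotone f) (c : ℤ) :
    Monotone (fun u => if c < u then f u else 0) := by
  intro a b hab
  dsimp only
  split_ifs with ha hb
  · exact hf hab
  · exact absurd (ha.trans_le hab) hb
  · exact zero_le
  · exact le_rfl

lemma surv_mono (G : ℕ → ℤ → PMF ℕ) (q : ℕ) (l : ℕ → ℤ)
    (h1 : ∀ (k : ℕ) (z : ℤ) (r : ℝ), pmfCdf (G k z) r ≤ pmfCdf (G k (z - 1)) (r + 1)) :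
    ∀ (n k : ℕ), Monotone (surv G q l k n) := by
  intro n
  induction n with
  | zero => intro k; exact monotone_const
  | succ n ih =>
    intro k
    apply monotone_int_of_step
    intro z
    rw [surv_succ, surv_succ]
    set χ : ℤ → ℝ≥0∞ := fun u => if l (k + 1) < u then surv G q l (k + 1) n u else 0 with hχ
    have hχmono : Monotone χ := chi_mono (ih (k + 1)) _
    have hφmono : Monotone (fun x : ℕ => χ (z + (x : ℤ) - q)) := by
      intro a b hab
      exact hχmono (by omega)
    have hcond : ∀ j : ℕ, cdfN (G k (z + 1)) j ≤ cdfN (G k z) (j + 1) := by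
      intro j
      have := h1 k (z + 1) (j : ℝ)
      rw [pmfCdf_natCast] at this
      simp only [add_sub_cancel_right] at this
      have hc : ((j : ℝ) + 1) = ((j + 1 : ℕ) : ℝ) := by push_cast; ring
      rw [hc, pmfCdf_natCast] at this
      exact this
    have key := exp_mono_shift (G k z) (G k (z + 1)) (fun x : ℕ => χ (z + (x : ℤ) - q))
      hφmono hcond
    calc (∑' (x : ℕ), (G k z) x * χ (z + (x : ℤ) - q))
        ≤ ∑' (x : ℕ), (G k (z + 1)) x * χ (z + ((x + 1 : ℕ) : ℤ) - q) := key
      _ = ∑' (x : ℕ), (G k (z + 1)) x * χ (z + 1 + (x : ℤ) - q) := by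
          refine tsum_congr fun x => ?_
          congr 1
          congr 1
          push_cast
          ring

lemma surv_comp (F G : ℕ → ℤ → PMF ℕ) (q : ℕ) (M : ℤ)
    (h1 : ∀ (k : ℕ) (z : ℤ) (r : ℝ), pmfCdf (G k z) r ≤ pmfCdf (G k (z - 1)) (r + 1))
    (h2 : ∀ (k : ℕ) (z : ℤ), z ≤ M - k * q →
      ∀ r : ℝ, pmfCdf (F k z) r ≤ pmfCdf (G k z) r)
    (l : ℕ → ℤ) :
    ∀ (n k : ℕ) (z : ℤ), (∀ j, k < j → j ≤ k + n → l j ≤ M - j * q) →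
      surv G q l k n z ≤ surv F q l k n z := by
  intro n
  induction n with
  | zero => intro k z _; exact le_rfl
  | succ n ih =>
    intro k z hl
    by_cases hz : M - k * q < z
    · rw [surv_eq_one F q M l (n+1) k z hl hz]
      exact surv_le_one G q l (n+1) k z
    · push_neg at hz
      rw [surv_succ, surv_succ]
      set χ : ℤ → ℝ≥0∞ := fun u => if l (k + 1) < u then surv G q l (k + 1) n u else 0 with hχ
      have hχmono : Monotone χ := chi_mono (surv_mono G q l h1 n (k + 1)) _
      have hφmono : Monotone (fun x : ℕ => χ (z + (x : ℤ) - q)) := by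
        intro a b hab
        exact hχmono (by omega)
      have hcond : ∀ j : ℕ, cdfN (F k z) j ≤ cdfN (G k z) j := by
        intro j
        have := h2 k z hz (j : ℝ)
        rw [pmfCdf_natCast, pmfCdf_natCast] at this
        exact this
      calc (∑' (x : ℕ), (G k z) x * χ (z + (x : ℤ) - q))
          ≤ ∑' (x : ℕ), (F k z) x * χ (z + (x : ℤ) - q) :=
            exp_mono (G k z) (F k z) _ hφmono hcond
        _ ≤ ∑' (x : ℕ), (F k z) x *
              (if l (k + 1) < z + (x : ℤ) - q then surv F q l (k + 1) n (z + (x : ℤ) - q)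
               else 0) := by
            refine ENNReal.tsum_le_tsum fun x => mul_le_mul_right ?_ _
            rw [hχ]
            dsimp only
            split
            · exact ih (k + 1) (z + (x : ℤ) - q) (fun j hj hj' => hl j (by omega) (by omega))
            · exact le_rfl

/-- Comparison lemma for two Markov additive processes. Suppose `S` and `T` start at
`b`, evolve by `S_{k+1} = S_k + X_k - q` with `X_k ~ F_{k,S_k}` and
`T_{k+1} = T_k + Y_k - q` with `Y_k ~ G_{k,T_k}`.  If (1) the CDFs of `G` satisfy
`G_{k,z}((-∞,l]) ≤ G_{k,z-1}((-∞,l+1])`, and (2) there is `M ≥ b` with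
`F_{k,z} ≻ G_{k,z}` (CDF domination) whenever `z ≤ M - k q`, then for all levels
`l_k ≤ M - k q`, `P(S₁ > l₁, …, S_n > l_n) ≥ P(T₁ > l₁, …, T_n > l_n)`. -/
theorem markov_additive_comparison (F G : ℕ → ℤ → PMF ℕ) (q : ℕ) (b M : ℤ)
    (hbM : b ≤ M)
    (h1 : ∀ (k : ℕ) (z : ℤ) (l : ℝ), pmfCdf (G k z) l ≤ pmfCdf (G k (z - 1)) (l + 1))
    (h2 : ∀ (k : ℕ) (z : ℤ), z ≤ M - k * q →
      ∀ l : ℝ, pmfCdf (F k z) l ≤ pmfCdf (G k z) l)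
    (n : ℕ) (hn : 1 ≤ n) (l : ℕ → ℤ)
    (hl : ∀ k, 1 ≤ k → k ≤ n → l k ≤ M - k * q) :
    surv G q l 0 n b ≤ surv F q l 0 n b := by
  exact surv_comp F G q M h1 h2 l n 0 b (fun j hj hj' => hl j hj (by omega))
end

section
/- Let z ≥ 2 be an integer and p₂, p₃ ∈ [0,1]. Let E₂ and E₃ be independent random variables with E₂ distributed Binomial(C(z,2), p₂) and E₃ distributed Binomial(C(z,3), p₃), and set E = E₂ + E₃. Then for every real s ≥ 1, P(E ≥ z−1) ≤ s^{−(z−1)} · (1 + p₂(s−1))^{z²/2} · (1 + p₃(s−1))^{z³/6}. -/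
open MeasureTheory Real ENNReal

/-- The binomial distribution with `N` trials and success probability `p`, as a
measure on `ℕ`. -/
noncomputable def binomialMeasure (N : ℕ) (p : ℝ) : Measure ℕ :=
  ∑ k ∈ Finset.range (N + 1),
    (ENNReal.ofReal ((N.choose k : ℝ) * p ^ k * (1 - p) ^ (N - k))) • Measure.dirac k

lemma lintegral_pow_binomial {Ω : Type} [MeasurableSpace Ω] (μ : Measure Ω)
    (N : ℕ) (p s : ℝ) (hp : p ∈ Set.Icc (0 : ℝ) 1) (hs : 1 ≤ s)
    (E : Ω → ℕ) (hm : Measurable E) (h : Measure.map E μ = binomialMeasure N p) :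
    ∫⁻ ω, ENNReal.ofReal s ^ E ω ∂μ = ENNReal.ofReal ((1 + p * (s - 1)) ^ N) := by
  have hs0 : (0 : ℝ) ≤ s := le_trans zero_le_one hs
  have key : ∫⁻ ω, ENNReal.ofReal s ^ E ω ∂μ
      = ∫⁻ n, ENNReal.ofReal s ^ n ∂(Measure.map E μ) :=
    (lintegral_map measurable_from_nat hm).symm
  rw [key, h, binomialMeasure, lintegral_finset_sum_measure]
  simp only [lintegral_smul_measure, lintegral_dirac, smul_eq_mul]
  have heq : ∀ k ∈ Finset.range (N + 1),
      ENNReal.ofReal ((N.choose k : ℝ) * p ^ k * (1 - p) ^ (N - k)) * ENNReal.ofReal s ^ k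
        = ENNReal.ofReal ((N.choose k : ℝ) * p ^ k * (1 - p) ^ (N - k) * s ^ k) := by
    intro k _
    rw [← ENNReal.ofReal_pow hs0, ← ENNReal.ofReal_mul]
    have hp0 := hp.1
    have hp1 : (0:ℝ) ≤ 1 - p := by linarith [hp.2]
    positivity
  rw [Finset.sum_congr rfl heq, ← ENNReal.ofReal_sum_of_nonneg]
  · congr 1
    have hb := add_pow (p * s) (1 - p) N
    have h2 : ∑ k ∈ Finset.range (N + 1), (N.choose k : ℝ) * p ^ k * (1 - p) ^ (N - k) * s ^ k
        = ∑ k ∈ Finset.range (N + 1), (p * s) ^ k * (1 - p) ^ (N - k) * (N.choose k : ℝ) := by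
      refine Finset.sum_congr rfl fun k _ => ?_
      ring
    rw [h2, ← hb]
    ring_nf
  · intro k _
    have hp0 := hp.1
    have hp1 : (0:ℝ) ≤ 1 - p := by linarith [hp.2]
    positivity

/-- Generating-function bound: if `E₂ ~ Bin(C(z,2), p₂)` and `E₃ ~ Bin(C(z,3), p₃)`
are independent and `E = E₂ + E₃`, then for all `s ≥ 1`,
`P(E ≥ z-1) ≤ s^{-(z-1)} (1+p₂(s-1))^{z²/2} (1+p₃(s-1))^{z³/6}`. -/
theorem binomial_sum_tail_bound (z : ℕ) (hz : 2 ≤ z) (p₂ p₃ : ℝ)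
    (hp₂ : p₂ ∈ Set.Icc (0 : ℝ) 1) (hp₃ : p₃ ∈ Set.Icc (0 : ℝ) 1)
    (Ω : Type) [MeasurableSpace Ω] (μ : Measure Ω) [IsProbabilityMeasure μ]
    (E₂ E₃ : Ω → ℕ) (hm₂ : Measurable E₂) (hm₃ : Measurable E₃)
    (hind : ProbabilityTheory.IndepFun E₂ E₃ μ)
    (h₂ : Measure.map E₂ μ = binomialMeasure (z.choose 2) p₂)
    (h₃ : Measure.map E₃ μ = binomialMeasure (z.choose 3) p₃)
    (s : ℝ) (hs : 1 ≤ s) :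
    μ {ω | z - 1 ≤ E₂ ω + E₃ ω} ≤
      ENNReal.ofReal
        (s ^ (-((z : ℝ) - 1)) * (1 + p₂ * (s - 1)) ^ ((z : ℝ) ^ 2 / 2) *
          (1 + p₃ * (s - 1)) ^ ((z : ℝ) ^ 3 / 6)) := by
  have hs0 : (0 : ℝ) ≤ s := le_trans zero_le_one hs
  have hs0' : (0 : ℝ) < s := lt_of_lt_of_le one_pos hs
  set t : ℝ≥0∞ := ENNReal.ofReal s with ht
  have ht1 : 1 ≤ t := ENNReal.one_le_ofReal.mpr hs
  set A₂ : ℝ := (1 + p₂ * (s - 1)) ^ (z.choose 2) with hA₂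
  set A₃ : ℝ := (1 + p₃ * (s - 1)) ^ (z.choose 3) with hA₃
  have hB₂ : (1:ℝ) ≤ 1 + p₂ * (s - 1) := by nlinarith [hp₂.1, hp₂.2]
  have hB₃ : (1:ℝ) ≤ 1 + p₃ * (s - 1) := by nlinarith [hp₃.1, hp₃.2]
  have hA₂0 : (0:ℝ) ≤ A₂ := by positivity
  have hA₃0 : (0:ℝ) ≤ A₃ := by positivity
  -- integral computation
  have hint₂ := lintegral_pow_binomial μ (z.choose 2) p₂ s hp₂ hs E₂ hm₂ h₂
  have hint₃ := lintegral_pow_binomial μ (z.choose 3) p₃ s hp₃ hs E₃ hm₃ h₃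
  have hmeas₂ : Measurable fun ω => t ^ E₂ ω :=
    (measurable_from_nat (f := fun n => t ^ n)).comp hm₂
  have hmeas₃ : Measurable fun ω => t ^ E₃ ω :=
    (measurable_from_nat (f := fun n => t ^ n)).comp hm₃
  have hind2 : ProbabilityTheory.IndepFun (fun ω => t ^ E₂ ω) (fun ω => t ^ E₃ ω) μ :=
    hind.comp (measurable_from_nat (f := fun n => t ^ n))
      (measurable_from_nat (f := fun n => t ^ n))
  have hprod : ∫⁻ ω, t ^ (E₂ ω + E₃ ω) ∂μ = ENNReal.ofReal A₂ * ENNReal.ofReal A₃ := by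
    have hfun : (fun ω => t ^ (E₂ ω + E₃ ω))
        = (fun ω => t ^ E₂ ω) * fun ω => t ^ E₃ ω := by
      funext ω; simp [pow_add]
    rw [hfun, ProbabilityTheory.lintegral_mul_eq_lintegral_mul_lintegral_of_indepFun
      hmeas₂ hmeas₃ hind2, hint₂, hint₃]
  -- Markov
  have hsub : {ω | z - 1 ≤ E₂ ω + E₃ ω} ⊆ {ω | t ^ (z - 1) ≤ t ^ (E₂ ω + E₃ ω)} :=
    fun ω hω => pow_le_pow_right' ht1 hω
  have hmeasE : Measurable fun ω => t ^ (E₂ ω + E₃ ω) :=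
    (measurable_from_nat (f := fun n => t ^ n)).comp (hm₂.add hm₃)
  have hmarkov := mul_meas_ge_le_lintegral (μ := μ) hmeasE (t ^ (z - 1))
  have hεne : t ^ (z - 1) ≠ 0 := by
    apply pow_ne_zero; exact fun h0 => by simp [h0] at ht1
  have hεtop : t ^ (z - 1) ≠ ⊤ := by
    apply pow_ne_top; simp [ht]
  have h1 : μ {ω | z - 1 ≤ E₂ ω + E₃ ω}
      ≤ (ENNReal.ofReal A₂ * ENNReal.ofReal A₃) / t ^ (z - 1) := by
    rw [ENNReal.le_div_iff_mul_le (Or.inl hεne) (Or.inl hεtop)]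
    calc μ {ω | z - 1 ≤ E₂ ω + E₃ ω} * t ^ (z - 1)
        = t ^ (z - 1) * μ {ω | z - 1 ≤ E₂ ω + E₃ ω} := mul_comm _ _
      _ ≤ t ^ (z - 1) * μ {ω | t ^ (z - 1) ≤ t ^ (E₂ ω + E₃ ω)} :=
          mul_le_mul_right (measure_mono hsub) _
      _ ≤ ∫⁻ ω, t ^ (E₂ ω + E₃ ω) ∂μ := hmarkov
      _ = ENNReal.ofReal A₂ * ENNReal.ofReal A₃ := hprod
  refine h1.trans ?_
  have hct : t ^ (z - 1) = ENNReal.ofReal (s ^ (z - 1)) := (ENNReal.ofReal_pow hs0 _).symm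
  rw [hct, ← ENNReal.ofReal_mul hA₂0, ← ENNReal.ofReal_div_of_pos (by positivity)]
  apply ENNReal.ofReal_le_ofReal
  -- real-number inequality
  have h1z : 1 ≤ z := le_trans one_le_two hz
  have hcast : ((z - 1 : ℕ) : ℝ) = (z : ℝ) - 1 := by
    push_cast [Nat.cast_sub h1z]; ring
  have hinv : s ^ (-((z : ℝ) - 1)) = (s ^ (z - 1))⁻¹ := by
    rw [← hcast, Real.rpow_neg hs0, Real.rpow_natCast]
  have hch2 : ((z.choose 2 : ℕ) : ℝ) ≤ (z : ℝ) ^ 2 / 2 := by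
    have h := Nat.descFactorial_le_pow z 2
    rw [Nat.descFactorial_eq_factorial_mul_choose] at h
    have h' : 2 * z.choose 2 ≤ z ^ 2 := by simpa [Nat.factorial] using h
    have h'' : (2:ℝ) * (z.choose 2 : ℕ) ≤ (z:ℝ) ^ 2 := by exact_mod_cast h'
    rw [le_div_iff₀ (by norm_num : (0:ℝ) < 2)]
    linarith
  have hch3 : ((z.choose 3 : ℕ) : ℝ) ≤ (z : ℝ) ^ 3 / 6 := by
    have h := Nat.descFactorial_le_pow z 3
    rw [Nat.descFactorial_eq_factorial_mul_choose] at h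
    have h' : 6 * z.choose 3 ≤ z ^ 3 := by simpa [Nat.factorial] using h
    have h'' : (6:ℝ) * (z.choose 3 : ℕ) ≤ (z:ℝ) ^ 3 := by exact_mod_cast h'
    rw [le_div_iff₀ (by norm_num : (0:ℝ) < 6)]
    linarith
  have hT₂ : A₂ ≤ (1 + p₂ * (s - 1)) ^ ((z : ℝ) ^ 2 / 2) := by
    rw [hA₂, ← Real.rpow_natCast]
    exact Real.rpow_le_rpow_of_exponent_le hB₂ hch2
  have hT₃ : A₃ ≤ (1 + p₃ * (s - 1)) ^ ((z : ℝ) ^ 3 / 6) := by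
    rw [hA₃, ← Real.rpow_natCast]
    exact Real.rpow_le_rpow_of_exponent_le hB₃ hch3
  calc A₂ * A₃ / s ^ (z - 1)
      ≤ (1 + p₂ * (s - 1)) ^ ((z : ℝ) ^ 2 / 2) * (1 + p₃ * (s - 1)) ^ ((z : ℝ) ^ 3 / 6)
        / s ^ (z - 1) := by
        gcongr
    _ = s ^ (-((z : ℝ) - 1)) * (1 + p₂ * (s - 1)) ^ ((z : ℝ) ^ 2 / 2) *
          (1 + p₃ * (s - 1)) ^ ((z : ℝ) ^ 3 / 6) := by
        rw [hinv]; ring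
end

section
/- Consider the Markov chain (Y_t)_{t≥0} on the integers defined by Y₀ = 1 and Y_{t+1} = Y_t + Z_t − 1, where conditionally on Y₀,…,Y_t the increment Z_t has law Binomial(max(n − t − Y_t, 0), p(t)) with p(t) = 1 − (1−p₂)(1−p₃)^t. Let K₀ = max{1, 2(9+ε)/r}. Then for every constant c > 0 there exists a constant K₁(c) > 0 such that, for all sufficiently large n and every positive integer T ≤ K₀·ln n, P(T + Y_T > K₁(c)·ln n) < n^{−c}. -/
open MeasureTheory Real

/-- The constant `K₀ = max {1, 2(9+ε)/r}`. -/
noncomputable def K0 (ε r : ℝ) : ℝ := max 1 (2 * (9 + ε) / r)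

/-- The edge-hitting probability `p(t) = 1 - (1-p₂)(1-p₃)^t` with `p₂ = (1-ε)/n`
and `p₃ = r/(n ln n)`. -/
noncomputable def pfun (n : ℕ) (ε r : ℝ) (t : ℕ) : ℝ :=
  1 - (1 - (1 - ε) / n) * (1 - r / (n * Real.log n)) ^ t

/-- The law of `Y_t` for the exploration Markov chain: `Y₀ = 1` and
`Y_{t+1} = Y_t + Z_t - 1` where, given `Y_t = y`, the increment `Z_t` is
`Binomial(max(n - t - y, 0), p(t))`-distributed. -/
noncomputable def Ylaw (n : ℕ) (ε r : ℝ) : ℕ → Measure ℤ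
  | 0 => Measure.dirac 1
  | t + 1 =>
      (Ylaw n ε r t).bind fun y =>
        (binomialMeasure ((n : ℤ) - t - y).toNat (pfun n ε r t)).map
          fun z : ℕ => y + (z : ℤ) - 1

open ENNReal

lemma lintegral_binomial (N : ℕ) (p : ℝ) (g : ℕ → ℝ≥0∞) :
    ∫⁻ z, g z ∂(binomialMeasure N p) =
      ∑ k ∈ Finset.range (N + 1),
        ENNReal.ofReal ((N.choose k : ℝ) * p ^ k * (1 - p) ^ (N - k)) * g k := by
  rw [binomialMeasure, lintegral_finset_sum_measure]
  simp [lintegral_smul_measure, lintegral_dirac]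

lemma binomial_exp (N : ℕ) {p : ℝ} (hp0 : 0 ≤ p) (hp1 : p ≤ 1) (a : ℝ) :
    ∫⁻ z, ENNReal.ofReal (Real.exp (a + z)) ∂(binomialMeasure N p)
      = ENNReal.ofReal (Real.exp a * (1 - p + p * Real.exp 1) ^ N) := by
  rw [lintegral_binomial]
  have hw : ∀ k, 0 ≤ (N.choose k : ℝ) * p ^ k * (1 - p) ^ (N - k) := fun k =>
    mul_nonneg (mul_nonneg (Nat.cast_nonneg _) (pow_nonneg hp0 _))
      (pow_nonneg (by linarith) _)
  have h1 : ∀ k ∈ Finset.range (N + 1),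
      ENNReal.ofReal ((N.choose k : ℝ) * p ^ k * (1 - p) ^ (N - k)) *
        ENNReal.ofReal (Real.exp (a + k))
      = ENNReal.ofReal (((N.choose k : ℝ) * p ^ k * (1 - p) ^ (N - k)) * Real.exp (a + k)) := by
    intro k _
    rw [ENNReal.ofReal_mul (hw k)]
  rw [Finset.sum_congr rfl h1, ← ENNReal.ofReal_sum_of_nonneg (fun k _ =>
    mul_nonneg (hw k) (Real.exp_nonneg _))]
  congr 1
  have key : (p * Real.exp 1 + (1 - p)) ^ N
      = ∑ k ∈ Finset.range (N + 1),
          (p * Real.exp 1) ^ k * (1 - p) ^ (N - k) * (N.choose k : ℝ) := add_pow _ _ N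
  rw [show (1 : ℝ) - p + p * Real.exp 1 = p * Real.exp 1 + (1 - p) by ring, key,
    Finset.mul_sum]
  apply Finset.sum_congr rfl
  intro k _
  have hk : Real.exp (k : ℝ) = Real.exp 1 ^ k := by
    rw [← Real.exp_nat_mul]; norm_num
  rw [Real.exp_add, hk]
  ring

lemma Ylaw_ae (n : ℕ) (ε r : ℝ) (t : ℕ) : ∀ᵐ y ∂(Ylaw n ε r t), 1 - (t : ℤ) ≤ y := by
  induction t with
  | zero =>
    rw [Ylaw, ae_dirac_iff .of_discrete]
    simp
  | succ t ih =>
    rw [Ylaw, ae_iff, Measure.bind_apply .of_discrete .of_discrete]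
    rw [lintegral_eq_zero_iff Measurable.of_discrete]
    filter_upwards [ih] with y hy
    rw [Pi.zero_apply]
    rw [Measure.map_apply Measurable.of_discrete .of_discrete]
    convert measure_empty (μ := binomialMeasure ((n : ℤ) - t - y).toNat (pfun n ε r t))
    ext z
    simp only [Set.mem_preimage, Set.mem_setOf_eq, Set.mem_empty_iff_false, iff_false,
      not_not]
    push_cast
    omega

lemma pfun_bounds (ε r : ℝ) (hε0 : 0 < ε) (hε1 : ε < 1) (hr : 0 < r) (n : ℕ)
    (hlog : 1 ≤ Real.log n) (hnr : r ≤ n) (t : ℕ) (ht : (t : ℝ) ≤ K0 ε r * Real.log n) :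
    0 ≤ pfun n ε r t ∧ pfun n ε r t ≤ 1 ∧
      (n : ℝ) * pfun n ε r t ≤ 1 + K0 ε r * r := by
  have hn1 : (1 : ℝ) ≤ n := by
    rcases Nat.eq_zero_or_pos n with h | h
    · subst h; simp at hlog; linarith
    · exact_mod_cast h
  have hn0 : (0 : ℝ) < n := by linarith
  have hlog0 : (0 : ℝ) < Real.log n := by linarith
  set p₂ : ℝ := (1 - ε) / n with hp₂def
  set p₃ : ℝ := r / (n * Real.log n) with hp₃def
  have hp₂0 : 0 ≤ p₂ := div_nonneg (by linarith) (by linarith)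
  have hp₂1 : p₂ ≤ 1 := by
    rw [hp₂def, div_le_one hn0]; linarith
  have hp₃0 : 0 ≤ p₃ := div_nonneg hr.le (by positivity)
  have hp₃1 : p₃ ≤ 1 := by
    rw [hp₃def, div_le_one (by positivity)]
    nlinarith
  have hb0 : 0 ≤ (1 - p₃) ^ t := pow_nonneg (by linarith) t
  have hb1 : (1 - p₃) ^ t ≤ 1 := pow_le_one₀ (by linarith) (by linarith)
  have habt0 : 0 ≤ (1 - p₂) * (1 - p₃) ^ t := mul_nonneg (by linarith) hb0
  have habt1 : (1 - p₂) * (1 - p₃) ^ t ≤ 1 := by nlinarith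
  have hpf : pfun n ε r t = 1 - (1 - p₂) * (1 - p₃) ^ t := rfl
  refine ⟨by rw [hpf]; linarith, by rw [hpf]; linarith, ?_⟩
  -- Bernoulli
  have hB : 1 + (t : ℝ) * (-p₃) ≤ (1 + -p₃) ^ t :=
    one_add_mul_le_pow (by linarith) t
  have hB' : 1 - (t : ℝ) * p₃ ≤ (1 - p₃) ^ t := by
    have : (1 : ℝ) + -p₃ = 1 - p₃ := by ring
    rw [this] at hB; linarith
  have hple : pfun n ε r t ≤ p₂ + t * p₃ := by
    rw [hpf]
    nlinarith [mul_le_mul_of_nonneg_left hB' (by linarith : (0:ℝ) ≤ 1 - p₂)]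
  have hnp₂ : (n : ℝ) * p₂ = 1 - ε := by
    rw [hp₂def]; field_simp
  have hnp₃ : (n : ℝ) * p₃ = r / Real.log n := by
    rw [hp₃def]; field_simp
  have htp₃ : (n : ℝ) * ((t : ℝ) * p₃) ≤ K0 ε r * r := by
    have : (n : ℝ) * ((t : ℝ) * p₃) = (t : ℝ) * (r / Real.log n) := by
      rw [← hnp₃]; ring
    rw [this]
    calc (t : ℝ) * (r / Real.log n) ≤ (K0 ε r * Real.log n) * (r / Real.log n) := by
          apply mul_le_mul_of_nonneg_right ht (by positivity)
      _ = K0 ε r * r := by field_simp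
  calc (n : ℝ) * pfun n ε r t ≤ (n : ℝ) * (p₂ + t * p₃) :=
        mul_le_mul_of_nonneg_left hple (by linarith)
    _ = (n : ℝ) * p₂ + (n : ℝ) * ((t : ℝ) * p₃) := by ring
    _ ≤ (1 - ε) + K0 ε r * r := by rw [hnp₂]; linarith
    _ ≤ 1 + K0 ε r * r := by linarith

lemma Ylaw_mgf (ε r : ℝ) (hε0 : 0 < ε) (hε1 : ε < 1) (hr : 0 < r) (n : ℕ)
    (hlog : 1 ≤ Real.log n) (hnr : r ≤ n) (T : ℕ) (hT : (T : ℝ) ≤ K0 ε r * Real.log n) :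
    ∀ t ≤ T, ∫⁻ y, ENNReal.ofReal (Real.exp (y : ℝ)) ∂(Ylaw n ε r t)
      ≤ ENNReal.ofReal
          (Real.exp (1 + ((1 + K0 ε r * r) * (Real.exp 1 - 1) - 1) * t)) := by
  intro t
  induction t with
  | zero =>
    intro _
    rw [Ylaw, lintegral_dirac]
    norm_num
  | succ t ih =>
    intro hts
    have htT : t ≤ T := Nat.le_of_succ_le hts
    have htK : (t : ℝ) ≤ K0 ε r * Real.log n := by
      calc (t : ℝ) ≤ (T : ℝ) := by exact_mod_cast htT
        _ ≤ _ := hT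
    obtain ⟨hp0, hp1, hpC⟩ := pfun_bounds ε r hε0 hε1 hr n hlog hnr t htK
    set D : ℝ := (1 + K0 ε r * r) * (Real.exp 1 - 1) with hDdef
    have he1 : (2 : ℝ) ≤ Real.exp 1 := by
      have := Real.add_one_le_exp 1; linarith
    have hK01 : (1 : ℝ) ≤ K0 ε r := le_max_left _ _
    have hD0 : 0 ≤ D := by
      apply mul_nonneg <;> nlinarith
    rw [Ylaw, Measure.lintegral_bind Measurable.of_discrete.aemeasurable Measurable.of_discrete.aemeasurable]
    trans (∫⁻ y, ENNReal.ofReal (Real.exp (D - 1)) * ENNReal.ofReal (Real.exp (y : ℝ))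
        ∂(Ylaw n ε r t))
    · apply lintegral_mono_ae
      filter_upwards [Ylaw_ae n ε r t] with y hy
      rw [lintegral_map Measurable.of_discrete Measurable.of_discrete]
      have hcast : ∀ z : ℕ, ((y + (z : ℤ) - 1 : ℤ) : ℝ) = ((y : ℝ) - 1) + (z : ℝ) := by
        intro z; push_cast; ring
      simp_rw [hcast]
      rw [binomial_exp _ hp0 hp1, ← ENNReal.ofReal_mul (Real.exp_nonneg _)]
      apply ENNReal.ofReal_le_ofReal
      set N := ((n : ℤ) - t - y).toNat with hNdef
      have hNn : (N : ℝ) ≤ n := by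
        have h2 : N ≤ n := Int.toNat_le.mpr (by omega)
        exact_mod_cast h2
      set x := pfun n ε r t * (Real.exp 1 - 1) with hx
      have hx0 : 0 ≤ x := mul_nonneg hp0 (by linarith)
      have hpow : (1 - pfun n ε r t + pfun n ε r t * Real.exp 1) ^ N ≤ Real.exp D := by
        have h1 : (1 - pfun n ε r t + pfun n ε r t * Real.exp 1) = 1 + x := by
          rw [hx]; ring
        rw [h1]
        calc (1 + x) ^ N ≤ Real.exp x ^ N := by
              apply pow_le_pow_left₀ (by linarith)
              have := Real.add_one_le_exp x; linarith
          _ = Real.exp (N * x) := (Real.exp_nat_mul x N).symm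
          _ ≤ Real.exp D := by
              apply Real.exp_le_exp.mpr
              have h3 : (N : ℝ) * pfun n ε r t ≤ (n : ℝ) * pfun n ε r t :=
                mul_le_mul_of_nonneg_right hNn hp0
              rw [hx, hDdef]
              nlinarith
      calc Real.exp ((y : ℝ) - 1) * (1 - pfun n ε r t + pfun n ε r t * Real.exp 1) ^ N
          ≤ Real.exp ((y : ℝ) - 1) * Real.exp D :=
            mul_le_mul_of_nonneg_left hpow (Real.exp_nonneg _)
        _ = Real.exp (D - 1) * Real.exp (y : ℝ) := by
            rw [← Real.exp_add, ← Real.exp_add]; congr 1; ring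
    · rw [lintegral_const_mul _ Measurable.of_discrete]
      calc ENNReal.ofReal (Real.exp (D - 1)) *
            ∫⁻ y, ENNReal.ofReal (Real.exp (y : ℝ)) ∂(Ylaw n ε r t)
          ≤ ENNReal.ofReal (Real.exp (D - 1)) *
              ENNReal.ofReal (Real.exp (1 + (D - 1) * t)) :=
            mul_le_mul_right (ih htT) _
        _ = _ := by
            rw [← ENNReal.ofReal_mul (Real.exp_nonneg _), ← Real.exp_add]
            congr 2
            push_cast
            ring

/-- For every `c > 0` there is `K₁ > 0` such that for all sufficiently large `n`
and every positive integer `T ≤ K₀ ln n`, the exploration chain satisfies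
`P(T + Y_T > K₁ ln n) < n^{-c}`. -/
theorem exploration_chain_tail_bound (ε r : ℝ) (hε0 : 0 < ε) (hε1 : ε < 1)
    (hr : 0 < r) :
    ∀ c > (0 : ℝ), ∃ K₁ > (0 : ℝ), ∃ N : ℕ, ∀ n ≥ N, ∀ T : ℕ, 1 ≤ T →
      (T : ℝ) ≤ K0 ε r * Real.log n →
      Ylaw n ε r T {y : ℤ | K₁ * Real.log n < (T : ℝ) + (y : ℝ)} <
        ENNReal.ofReal ((n : ℝ) ^ (-c)) := by
  intro c hc
  set D : ℝ := (1 + K0 ε r * r) * (Real.exp 1 - 1) with hDdef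
  have hK01 : (1 : ℝ) ≤ K0 ε r := le_max_left _ _
  have he1 : (2 : ℝ) ≤ Real.exp 1 := by have := Real.add_one_le_exp 1; linarith
  have hD0 : 0 < D := by apply _root_.mul_pos <;> nlinarith
  refine ⟨D * K0 ε r + c + 2, by nlinarith, max 3 ⌈r⌉₊, ?_⟩
  intro n hn T hT1 hTK
  have hn3 : 3 ≤ n := le_trans (le_max_left _ _) hn
  have hnr : r ≤ n := by
    have h1 : (⌈r⌉₊ : ℝ) ≤ n := by
      exact_mod_cast le_trans (le_max_right 3 ⌈r⌉₊) hn
    exact le_trans (Nat.le_ceil r) h1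
  have hnpos : (0 : ℝ) < n := by
    have : (3 : ℝ) ≤ n := by exact_mod_cast hn3
    linarith
  have hlog : 1 ≤ Real.log n := by
    rw [Real.le_log_iff_exp_le hnpos]
    calc Real.exp 1 ≤ 2.7182818286 := Real.exp_one_lt_d9.le
      _ ≤ 3 := by norm_num
      _ ≤ n := by exact_mod_cast hn3
  have hL := Ylaw_mgf ε r hε0 hε1 hr n hlog hnr T hTK T le_rfl
  rw [← hDdef] at hL
  set K₁ : ℝ := D * K0 ε r + c + 2 with hK₁def
  set A : ℝ := K₁ * Real.log n - T with hAdef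
  have hsub : {y : ℤ | K₁ * Real.log n < (T : ℝ) + (y : ℝ)} ⊆
      {y : ℤ | ENNReal.ofReal (Real.exp A) ≤ ENNReal.ofReal (Real.exp (y : ℝ))} := by
    intro y hy
    simp only [Set.mem_setOf_eq] at hy ⊢
    exact ENNReal.ofReal_le_ofReal (Real.exp_le_exp.mpr (by rw [hAdef]; linarith))
  have hmar := mul_meas_ge_le_lintegral (μ := Ylaw n ε r T)
      (f := fun y : ℤ => ENNReal.ofReal (Real.exp (y : ℝ))) Measurable.of_discrete
      (ENNReal.ofReal (Real.exp A))
  have hev : ENNReal.ofReal (Real.exp A) *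
      Ylaw n ε r T {y : ℤ | K₁ * Real.log n < (T : ℝ) + (y : ℝ)}
      ≤ ENNReal.ofReal (Real.exp (1 + (D - 1) * T)) :=
    le_trans (mul_le_mul_right (measure_mono hsub) _) (le_trans hmar hL)
  have hrpow : (n : ℝ) ^ (-c) = Real.exp (-c * Real.log n) := by
    rw [Real.rpow_def_of_pos hnpos]; ring_nf
  have hstrict : Real.exp (1 + (D - 1) * T) < Real.exp A * ((n : ℝ) ^ (-c)) := by
    rw [hrpow, ← Real.exp_add]
    apply Real.exp_lt_exp.mpr
    have h1 : D * (T : ℝ) ≤ D * (K0 ε r * Real.log n) :=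
      mul_le_mul_of_nonneg_left hTK hD0.le
    rw [hAdef, hK₁def]
    nlinarith [h1, hlog]
  have hA0 : ENNReal.ofReal (Real.exp A) ≠ 0 :=
    (ENNReal.ofReal_pos.mpr (Real.exp_pos A)).ne'
  have hAtop : ENNReal.ofReal (Real.exp A) ≠ ⊤ := ENNReal.ofReal_ne_top
  rw [← ENNReal.mul_lt_mul_iff_right hA0 hAtop]
  calc ENNReal.ofReal (Real.exp A) *
        Ylaw n ε r T {y : ℤ | K₁ * Real.log n < (T : ℝ) + (y : ℝ)}
      ≤ ENNReal.ofReal (Real.exp (1 + (D - 1) * T)) := hev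
    _ < ENNReal.ofReal (Real.exp A * (n : ℝ) ^ (-c)) :=
        (ENNReal.ofReal_lt_ofReal_iff
          (mul_pos (Real.exp_pos _) (Real.rpow_pos_of_pos hnpos _))).mpr hstrict
    _ = ENNReal.ofReal (Real.exp A) * ENNReal.ofReal ((n : ℝ) ^ (-c)) :=
        ENNReal.ofReal_mul (Real.exp_nonneg _)
end
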